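/- Let k be a perfect field of characteristic p > 2, S a polynomial ring over k, and I a radical homogeneous ideal such that the Rees-like algebra RL(I) = S[It,t^2] is F-split. Then S/I is F-split. -/

import Mathlib

open Polynomial

/-- The Rees-like algebra `S[It, t²]`: the `S`-subalgebra of `S[t]` generated by
`{f·t : f ∈ I}` and `t²`. -/
noncomputable def ReesLike (S : Type*) [CommRing S] (I : Ideal S) : Subalgebra S (Polynomial S) :=
  Algebra.adjoin S ({p : Polynomial S | ∃ a ∈ I, p = Polynomial.C a * Polynomial.X} ∪
    {Polynomial.X ^ 2})

/-- A ring `A` of characteristic `p` is *F-split* if the Frobenius `A → A` splits as a map of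
`A`-modules, i.e. there is an additive map `φ : A → A` with `φ(1) = 1` and
`φ(aᵖ·b) = a·φ(b)` for all `a b : A`. -/
def IsFSplit (p : ℕ) (A : Type*) [CommRing A] : Prop :=
  ∃ φ : A →+ A, φ 1 = 1 ∧ ∀ a b : A, φ (a ^ p * b) = a * φ b

lemma reesLike_coeff_odd {S : Type*} [CommRing S] {I : Ideal S} {q : Polynomial S}
    (hq : q ∈ ReesLike S I) (j : ℕ) (hj : Odd j) : q.coeff j ∈ I := by
  induction hq using Algebra.adjoin_induction generalizing j with
  | mem x hx =>
    rcases hx with hx | hx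
    · obtain ⟨a, ha, rfl⟩ := hx
      rw [coeff_C_mul, coeff_X]
      split
      · simpa using ha
      · simp
    · simp only [Set.mem_singleton_iff] at hx
      subst hx
      rw [coeff_X_pow]
      rcases hj with ⟨m, hm⟩
      split
      · omega
      · simp
  | algebraMap r =>
    rw [Polynomial.algebraMap_eq, coeff_C]
    rcases hj with ⟨m, hm⟩
    split
    · omega
    · simp
  | add x y hx hy ihx ihy =>
    rw [coeff_add]
    exact I.add_mem (ihx j hj) (ihy j hj)
  | mul x y hx hy ihx ihy =>
    rw [coeff_mul]
    refine Submodule.sum_mem _ ?_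
    rintro ⟨i, l⟩ hil
    rw [Finset.HasAntidiagonal.mem_antidiagonal] at hil
    by_cases hi : Odd i
    · exact I.mul_mem_right _ (ihx i hi)
    · have hl : Odd l := by
        rcases hj with ⟨m, hm⟩
        rcases Nat.not_odd_iff_even.mp hi with ⟨c, hc⟩
        exact ⟨m - c, by omega⟩
      exact I.mul_mem_left _ (ihy l hl)

theorem aux {S : Type*} [CommRing S] [IsDomain S] {I : Ideal S} {p : ℕ} (hodd : Odd p)
    (hsplit : IsFSplit p (ReesLike S I)) : IsFSplit p (S ⧸ I) := by
  set A := ReesLike S I with hA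
  obtain ⟨φ, hφ1, hφ⟩ := hsplit
  have hC : ∀ s : S, (C s : Polynomial S) ∈ A := fun s => by
    simpa [Polynomial.algebraMap_eq] using A.algebraMap_mem s
  have hX2 : (X ^ 2 : Polynomial S) ∈ A := Algebra.subset_adjoin (Or.inr rfl)
  have hCX : ∀ s ∈ I, (C s * X : Polynomial S) ∈ A := fun s hs =>
    Algebra.subset_adjoin (Or.inl ⟨s, hs, rfl⟩)
  set ψ : S → S := fun s => ((φ ⟨C s, hC s⟩ : A) : Polynomial S).coeff 0 with hψ
  have hψ1 : ψ 1 = 1 := by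
    show ((φ ⟨C 1, hC 1⟩ : A) : Polynomial S).coeff 0 = 1
    rw [show (⟨C 1, hC 1⟩ : A) = 1 from Subtype.ext (by simp), hφ1]
    simp
  have hψ0 : ψ 0 = 0 := by
    show ((φ ⟨C 0, hC 0⟩ : A) : Polynomial S).coeff 0 = 0
    rw [show (⟨C 0, hC 0⟩ : A) = 0 from Subtype.ext (by simp), map_zero]
    simp
  have hψadd : ∀ x y : S, ψ (x + y) = ψ x + ψ y := by
    intro x y
    show ((φ ⟨C (x + y), hC _⟩ : A) : Polynomial S).coeff 0 = _
    rw [show (⟨C (x + y), hC _⟩ : A) = ⟨C x, hC x⟩ + ⟨C y, hC y⟩ from Subtype.ext (by simp),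
      map_add, Subalgebra.coe_add, coeff_add]
  have hψp : ∀ x y : S, ψ (x ^ p * y) = x * ψ y := by
    intro x y
    show ((φ ⟨C (x ^ p * y), hC _⟩ : A) : Polynomial S).coeff 0 = _
    rw [show (⟨C (x ^ p * y), hC _⟩ : A) = (⟨C x, hC x⟩ : A) ^ p * ⟨C y, hC y⟩ from
      Subtype.ext (by push_cast; rw [map_mul, map_pow]), hφ]
    show (C x * ((φ ⟨C y, hC y⟩ : A) : Polynomial S)).coeff 0 = _
    rw [coeff_C_mul]
  have hψI : ∀ s ∈ I, ψ s ∈ I := by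
    intro s hs
    rcases eq_or_ne s 0 with rfl | hs0
    · rw [hψ0]; exact I.zero_mem
    obtain ⟨m, hm⟩ := hodd
    set cs : A := ⟨C s, hC s⟩ with hcs
    set x2 : A := ⟨X ^ 2, hX2⟩ with hx2
    set u : A := ⟨C s * X, hCX s hs⟩ with hu
    have key : (cs * x2) ^ p * cs = u ^ p * (u * x2 ^ m) := by
      refine Subtype.ext ?_
      show (C s * X ^ 2) ^ p * C s = (C s * X) ^ p * (C s * X * (X ^ 2) ^ m)
      rw [mul_pow, mul_pow, ← pow_mul, ← pow_mul,
        show 2 * m = p - 1 by omega, show 2 * p = p + 1 + (p - 1) by omega,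
        pow_add, pow_add, pow_one]
      ring
    have e1 := hφ (cs * x2) cs
    have e2 := hφ u (u * x2 ^ m)
    rw [key, e2] at e1
    have e1' : (C s * X ^ 2) * ((φ cs : A) : Polynomial S)
        = (C s * X) * ((φ (u * x2 ^ m) : A) : Polynomial S) := congrArg Subtype.val e1.symm
    have e3 : (C s * X) * (X * ((φ cs : A) : Polynomial S))
        = (C s * X) * ((φ (u * x2 ^ m) : A) : Polynomial S) := by
      rw [← e1']; ring
    have hne : (C s * X : Polynomial S) ≠ 0 :=
      mul_ne_zero (fun h => hs0 (by simpa using (C_eq_zero.mp h))) X_ne_zero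
    have e4 := mul_left_cancel₀ hne e3
    have h5 : ((φ (u * x2 ^ m) : A) : Polynomial S).coeff 1 ∈ I :=
      reesLike_coeff_odd (φ (u * x2 ^ m)).2 1 ⟨0, by omega⟩
    rw [← e4, coeff_X_mul] at h5
    exact h5
  have hker : ∀ a b : S, a - b ∈ I →
      Ideal.Quotient.mk I (ψ a) = Ideal.Quotient.mk I (ψ b) := by
    intro a b h2
    rw [Ideal.Quotient.eq]
    have h3 : ψ (a - b) ∈ I := hψI _ h2
    have hsub : ψ (a - b) = ψ a - ψ b := by
      have h := hψadd (a - b) b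
      rw [sub_add_cancel] at h
      rw [h]; ring
    rwa [hsub] at h3
  have sound : ∀ a b : S, Submodule.quotientRel I a b →
      Ideal.Quotient.mk I (ψ a) = Ideal.Quotient.mk I (ψ b) := by
    intro a b hab
    have h1 : Ideal.Quotient.mk I a = Ideal.Quotient.mk I b := Quotient.sound' hab
    exact hker a b (by rwa [Ideal.Quotient.eq] at h1)
  refine ⟨{ toFun := fun x => Quotient.liftOn' x (fun s => Ideal.Quotient.mk I (ψ s)) sound
            map_zero' := ?_
            map_add' := ?_ }, ?_, ?_⟩
  · show Ideal.Quotient.mk I (ψ 0) = 0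
    rw [hψ0, map_zero]
  · intro x y
    obtain ⟨a, rfl⟩ := Ideal.Quotient.mk_surjective x
    obtain ⟨b, rfl⟩ := Ideal.Quotient.mk_surjective y
    show Ideal.Quotient.mk I (ψ (a + b)) = Ideal.Quotient.mk I (ψ a) + Ideal.Quotient.mk I (ψ b)
    rw [hψadd, map_add]
  · show Ideal.Quotient.mk I (ψ 1) = 1
    rw [hψ1, map_one]
  · intro a b
    obtain ⟨x, rfl⟩ := Ideal.Quotient.mk_surjective a
    obtain ⟨y, rfl⟩ := Ideal.Quotient.mk_surjective b
    show Quotient.liftOn' ((Ideal.Quotient.mk I x) ^ p * Ideal.Quotient.mk I y) _ sound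
        = Ideal.Quotient.mk I x * Quotient.liftOn' (Ideal.Quotient.mk I y) _ sound
    rw [← map_pow, ← map_mul]
    show Ideal.Quotient.mk I (ψ (x ^ p * y)) = Ideal.Quotient.mk I x * Ideal.Quotient.mk I (ψ y)
    rw [hψp, map_mul]


/-- **Theorem (Fsplit, ⇐).** Let `k` be a perfect field of characteristic `p > 2`,
`S = k[x 1, …, x n]`, and `I` a radical homogeneous ideal such that the Rees-like algebra
`S[It, t²]` is F-split.  Then `S/I` is F-split. -/
theorem quotient_isFSplit_of_reesLike_isFSplit
    (k : Type*) [Field k] (p : ℕ) [Fact p.Prime] [CharP k p] [PerfectRing k p] (hp : 2 < p)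
    (n : ℕ) (I : Ideal (MvPolynomial (Fin n) k))
    (hhom : ∀ q ∈ I, ∀ d : ℕ, MvPolynomial.homogeneousComponent d q ∈ I)
    (hrad : I.IsRadical)
    (hsplit : IsFSplit p (ReesLike (MvPolynomial (Fin n) k) I)) :
    IsFSplit p (MvPolynomial (Fin n) k ⧸ I) :=
  aux ((Fact.out : p.Prime).odd_of_ne_two (by omega)) hsplit
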